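/- Let δ ∈ (2/3, 1) and let μᵢ be the inverse recurrence μ₀ ∈ (0,1/3], μᵢ = h(μᵢ₋₁), where h is the inverse of g(x) = (x+x²)/(1+x²). If an integer n satisfies n ≥ 1/(1-δ) + 2 ln(1/(1-δ)), then μₙ < 1 - δ. -/

import Mathlib

noncomputable def h (y : ℝ) : ℝ := (-1 + Real.sqrt (1 + 4*y*(1-y))) / (2*(1-y))

noncomputable def museq (μ₀ : ℝ) : ℕ → ℝ
  | 0 => μ₀
  | i + 1 => h (museq μ₀ i)

noncomputable def Tfun (x : ℝ) : ℝ := x + 2*Real.log x - 14/x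

lemma h_bounds (y : ℝ) (hy0 : 0 < y) (hy1 : y ≤ 1/3) : 0 < h y ∧ h y < y := by
  have hD : (0:ℝ) ≤ 1 + 4*y*(1-y) := by nlinarith
  have hs2 : Real.sqrt (1 + 4*y*(1-y)) ^ 2 = 1 + 4*y*(1-y) := Real.sq_sqrt hD
  set s := Real.sqrt (1 + 4*y*(1-y)) with hs
  have hsnn : 0 ≤ s := Real.sqrt_nonneg _
  have hy1' : y < 1 := by linarith
  have hs1 : 1 < s := by nlinarith
  constructor
  · unfold h; rw [← hs]
    apply div_pos (by linarith) (by linarith)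
  · unfold h; rw [← hs]
    rw [div_lt_iff₀ (by linarith : (0:ℝ) < 2*(1-y))]
    nlinarith [sq_nonneg (s - (1 + 2*y - 2*y^2)), mul_pos hy0 (sub_pos.mpr hy1')]

lemma h_quad (y : ℝ) (hy0 : 0 < y) (hy1 : y < 1) :
    y * (1 + (h y)^2) = h y + (h y)^2 := by
  have hD : (0:ℝ) ≤ 1 + 4*y*(1-y) := by nlinarith
  have hs2 : Real.sqrt (1 + 4*y*(1-y)) ^ 2 = 1 + 4*y*(1-y) := Real.sq_sqrt hD
  set s := Real.sqrt (1 + 4*y*(1-y)) with hs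
  have hne : (2*(1-y)) ≠ 0 := by
    have : (0:ℝ) < 2*(1-y) := by linarith
    exact ne_of_gt this
  have hne' : 1 - y ≠ 0 := (by linarith : (0:ℝ) < 1 - y).ne'
  unfold h; rw [← hs]
  field_simp
  ring_nf
  linear_combination (y - 1) * hs2

lemma mu_bounds (μ₀ : ℝ) (h0 : 0 < μ₀) (h1 : μ₀ ≤ 1/3) :
    ∀ n, 0 < museq μ₀ n ∧ museq μ₀ n ≤ 1/3 := by
  intro n
  induction n with
  | zero => exact ⟨h0, h1⟩
  | succ k ih =>
      obtain ⟨hp, hl⟩ := ih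
      obtain ⟨p1, p2⟩ := h_bounds _ hp hl
      exact ⟨by simpa [museq] using p1, by simp [museq]; linarith⟩

lemma recip_step (y : ℝ) (hy0 : 0 < y) (hy1 : y ≤ 1/3) :
    1/y + 1 - 2 * h y ≤ 1 / h y := by
  obtain ⟨hx0, hxy⟩ := h_bounds y hy0 hy1
  set x := h y with hx
  have hq : y * (1 + x^2) = x + x^2 := h_quad y hy0 (by linarith)
  have e1 : 1/x - 1/y = (1-x)/(1+x) := by
    rw [div_sub_div _ _ (ne_of_gt hx0) (ne_of_gt hy0),
        div_eq_div_iff (by positivity) (by positivity : (1:ℝ)+x ≠ 0)]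
    nlinarith [hq]
  have e2 : 1 - 2*x ≤ (1-x)/(1+x) := by
    rw [le_div_iff₀ (by linarith : (0:ℝ) < 1+x)]
    nlinarith [sq_nonneg x]
  linarith

lemma keyineq (x : ℝ) (hx : 3 ≤ x) :
    Tfun x + 1 ≤ Tfun (x + 1 - 2/x) := by
  have hx0 : (0:ℝ) < x := by linarith
  have h2x : 2/x ≤ 2/3 := by
    rw [div_le_div_iff₀ hx0 (by norm_num)]; linarith
  set f := x + 1 - 2/x with hf
  have hf3 : 3 ≤ f := by rw [hf]; linarith
  have hf0 : (0:ℝ) < f := by linarith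
  have hlog : Real.log x - Real.log f ≤ x/f - 1 := by
    have := Real.log_le_sub_one_of_pos (show (0:ℝ) < x/f by positivity)
    rwa [Real.log_div (ne_of_gt hx0) (ne_of_gt hf0)] at this
  have expand : f + 2 - (x + 1 - 14/x + 2*(x/f) + 14/f)
      = (8*x - 24) / (x * (x^2 + x - 2)) := by
    rw [hf]
    have h1 : x ≠ 0 := ne_of_gt hx0
    have h2 : x^2 + x - 2 ≠ 0 := by nlinarith
    have h2' : x * (x + 1) - 2 ≠ 0 := by nlinarith
    have h3 : x + 1 - 2/x = (x^2 + x - 2)/x := by field_simp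
    rw [h3]
    field_simp
    ring
  have hpos : (0:ℝ) ≤ (8*x - 24) / (x * (x^2 + x - 2)) := by
    apply div_nonneg (by linarith)
    nlinarith
  unfold Tfun
  linarith

lemma Tmono (p q : ℝ) (hp : 3 ≤ p) (hpq : p ≤ q) : Tfun p ≤ Tfun q := by
  unfold Tfun
  have hp0 : (0:ℝ) < p := by linarith
  have hlog : Real.log p ≤ Real.log q := Real.log_le_log hp0 hpq
  have hdiv : 14/q ≤ 14/p := by
    apply div_le_div_of_nonneg_left (by norm_num) hp0 hpq
  linarith

lemma main_bound (μ₀ : ℝ) (h0 : 0 < μ₀) (h1 : μ₀ ≤ 1/3) :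
    ∀ n : ℕ, (n:ℝ) + 3 + 2*Real.log 3 - 14/3 ≤ Tfun (1 / museq μ₀ n) := by
  intro n
  induction n with
  | zero =>
      have hX : 3 ≤ 1/μ₀ := by rw [le_div_iff₀ h0]; linarith
      have := Tmono 3 (1/μ₀) le_rfl hX
      have hT3 : Tfun 3 = 3 + 2*Real.log 3 - 14/3 := by unfold Tfun; ring
      simp only [museq, Nat.cast_zero]
      linarith
  | succ k ih =>
      obtain ⟨hy0, hy1⟩ := mu_bounds μ₀ h0 h1 k
      obtain ⟨hx0, hx1⟩ := mu_bounds μ₀ h0 h1 (k+1)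
      have hxh : museq μ₀ (k+1) = h (museq μ₀ k) := rfl
      have hxy : museq μ₀ (k+1) < museq μ₀ k := by
        rw [hxh]; exact (h_bounds _ hy0 hy1).2
      have hrec : 1/(museq μ₀ k) + 1 - 2*(museq μ₀ (k+1)) ≤ 1/(museq μ₀ (k+1)) := by
        rw [hxh]; exact recip_step _ hy0 hy1
      set y := museq μ₀ k with hy
      set x := museq μ₀ (k+1) with hx
      have hp3 : 3 ≤ 1/y := by rw [le_div_iff₀ hy0]; linarith
      have hq3 : 3 ≤ 1/x := by rw [le_div_iff₀ hx0]; linarith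
      have h2 : 2/(1/y) = 2*y := by
        field_simp
      have hqf : 1/y + 1 - 2/(1/y) ≤ 1/x := by rw [h2]; linarith
      have h3f : 3 ≤ 1/y + 1 - 2/(1/y) := by rw [h2]; linarith
      have step := keyineq (1/y) hp3
      have mono := Tmono (1/y + 1 - 2/(1/y)) (1/x) h3f hqf
      push_cast
      linarith

theorem stmt_14 (δ μ₀ : ℝ) (hδ0 : 2/3 < δ) (hδ1 : δ < 1)
    (h0 : 0 < μ₀) (h1 : μ₀ ≤ 1/3) (n : ℕ)
    (hn : (n : ℝ) ≥ 1/(1-δ) + 2 * Real.log (1/(1-δ))) :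
    museq μ₀ n < 1 - δ := by
  set ε := 1 - δ with hε
  have hε0 : 0 < ε := by rw [hε]; linarith
  have hε3 : ε < 1/3 := by rw [hε]; linarith
  by_contra hcon
  push_neg at hcon
  obtain ⟨hm0, hm1⟩ := mu_bounds μ₀ h0 h1 n
  set m := museq μ₀ n with hm
  have hq3 : 3 ≤ 1/m := by rw [le_div_iff₀ hm0]; linarith
  have hqw : 1/m ≤ 1/ε := by
    apply div_le_div_of_nonneg_left (by norm_num) hε0 hcon
  have hmain := main_bound μ₀ h0 h1 n
  have hTm : Tfun (1/m) ≤ Tfun (1/ε) := Tmono _ _ hq3 hqw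
  have hTw : Tfun (1/ε) = 1/ε + 2*Real.log (1/ε) - 14/(1/ε) := rfl
  have hln3 : (1:ℝ) < Real.log 3 := by
    rw [Real.lt_log_iff_exp_lt (by norm_num)]
    calc Real.exp 1 < 2.7182818286 := Real.exp_one_lt_d9
      _ < 3 := by norm_num
  have hwpos : 0 < 14/(1/ε) := by positivity
  rw [← hm] at hmain
  linarith [hn, hmain, hTm]
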